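/- For n ≥ 2 and 1 ≤ k < n/2, there exists an (n,k)-separating system S with |S| ≤ ⌈n/k⌉ · ⌈log_{⌈n/k⌉} n⌉. -/

import Mathlib

/-- An `(n,k)`-separating system on `Fin n`: a family of subsets each of size at most `k`
such that every pair of distinct elements is separated by some member. -/
def IsSeparatingSystem (n k : ℕ) (S : Finset (Finset (Fin n))) : Prop :=
  (∀ s ∈ S, s.card ≤ k) ∧
  ∀ i j : Fin n, i ≠ j → ∃ s ∈ S, (i ∈ s ∧ j ∉ s) ∨ (j ∈ s ∧ i ∉ s)

namespace SepSys

/-- The "transpose" rearrangement map on `[0,n)` for modulus `b`. -/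
def g (n b x : ℕ) : ℕ :=
  ((Finset.range n).filter (fun y => y % b < x % b)).card + x / b

lemma count_lt (n b : ℕ) (hb : 0 < b) {x : ℕ} (hx : x < n) :
    x / b < ((Finset.range n).filter (fun y => y % b = x % b)).card := by
  have h := Finset.card_le_card_of_injOn (f := fun t => b * t + x % b)
    (s := Finset.range (x / b + 1))
    (t := (Finset.range n).filter (fun y => y % b = x % b)) ?_ ?_
  · simpa using h
  · intro t ht
    simp only [Finset.mem_coe, Finset.mem_range] at ht
    have ht' : t ≤ x / b := by omega
    have hdm := Nat.div_add_mod x b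
    have hmul := Nat.mul_le_mul_left b ht'
    have h1 : b * t + x % b ≤ x := by omega
    simp only [Finset.mem_coe, Finset.mem_filter, Finset.mem_range]
    refine ⟨by omega, ?_⟩
    rw [Nat.mul_add_mod, Nat.mod_eq_of_lt (Nat.mod_lt x hb)]
  · intro t1 h1 t2 h2 heq
    simp only at heq
    have : b * t1 = b * t2 := by omega
    exact Nat.eq_of_mul_eq_mul_left hb this

lemma union_card_le (n b c : ℕ) :
    ((Finset.range n).filter (fun y => y % b < c)).card +
      ((Finset.range n).filter (fun y => y % b = c)).card ≤ n := by
  rw [← Finset.card_union_of_disjoint (by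
    rw [Finset.disjoint_left]
    intro a ha hb
    simp only [Finset.mem_filter] at ha hb
    omega)]
  calc _ ≤ (Finset.range n).card :=
        Finset.card_le_card (Finset.union_subset (Finset.filter_subset _ _)
          (Finset.filter_subset _ _))
    _ = n := Finset.card_range n

lemma g_lt (n b : ℕ) (hb : 0 < b) {x : ℕ} (hx : x < n) : g n b x < n := by
  have h1 := count_lt n b hb hx
  have h2 := union_card_le n b (x % b)
  unfold g
  omega

lemma g_inj (n b : ℕ) (hb : 0 < b) {x y : ℕ} (hx : x < n) (hy : y < n)
    (hxy : g n b x = g n b y) : x = y := by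
  have key : ∀ {u v : ℕ}, u < n → v < n → u % b < v % b → g n b u < g n b v := by
    intro u v hu hv huv
    have h1 := count_lt n b hb hu
    have h2 : ((Finset.range n).filter (fun y => y % b < u % b)).card +
        ((Finset.range n).filter (fun y => y % b = u % b)).card ≤
        ((Finset.range n).filter (fun y => y % b < v % b)).card := by
      rw [← Finset.card_union_of_disjoint (by
        rw [Finset.disjoint_left]
        intro a ha hb'
        simp only [Finset.mem_filter] at ha hb'
        omega)]
      apply Finset.card_le_card
      intro a ha
      simp only [Finset.mem_union, Finset.mem_filter] at ha ⊢
      rcases ha with h | h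
      · exact ⟨h.1, by omega⟩
      · exact ⟨h.1, by omega⟩
    unfold g
    exact lt_of_lt_of_le (Nat.add_lt_add_left h1 _) (le_trans h2 (Nat.le_add_right _ _))
  rcases lt_trichotomy (x % b) (y % b) with h | h | h
  · exact absurd hxy (Nat.ne_of_lt (key hx hy h))
  · have hd : x / b = y / b := by
      unfold g at hxy
      rw [h] at hxy
      omega
    have d1 := Nat.div_add_mod x b
    have d2 := Nat.div_add_mod y b
    have hd2 : b * (x / b) = b * (y / b) := by rw [hd]
    omega
  · exact absurd hxy.symm (Nat.ne_of_lt (key hy hx h))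

lemma iter_lt (n b : ℕ) (hb : 0 < b) : ∀ (r : ℕ) {x : ℕ}, x < n → (g n b)^[r] x < n := by
  intro r
  induction r with
  | zero => intro x hx; simpa using hx
  | succ r ih =>
    intro x hx
    rw [Function.iterate_succ_apply']
    exact g_lt n b hb (ih hx)

lemma iter_inj (n b : ℕ) (hb : 0 < b) : ∀ (r : ℕ) {x y : ℕ}, x < n → y < n →
    (g n b)^[r] x = (g n b)^[r] y → x = y := by
  intro r
  induction r with
  | zero => intro x y _ _ h; simpa using h
  | succ r ih =>
    intro x y hx hy h
    rw [Function.iterate_succ_apply', Function.iterate_succ_apply'] at h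
    exact ih hx hy (g_inj n b hb (iter_lt n b hb r hx) (iter_lt n b hb r hy) h)

lemma iter_sub (n b : ℕ) : ∀ (r : ℕ) {i j : ℕ},
    (∀ s < r, (g n b)^[s] i % b = (g n b)^[s] j % b) →
    (i : ℤ) - j = (b : ℤ) ^ r * (((g n b)^[r] i : ℤ) - ((g n b)^[r] j : ℤ)) := by
  intro r
  induction r with
  | zero => intro i j _; simp
  | succ r ih =>
    intro i j hcol
    have h1 := ih (i := i) (j := j) (fun s hs => hcol s (by omega))
    set x := (g n b)^[r] i with hxd
    set y := (g n b)^[r] j with hyd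
    have hxy : x % b = y % b := hcol r (by omega)
    have hgd : (g n b x : ℤ) - (g n b y : ℤ) = ((x / b : ℕ) : ℤ) - ((y / b : ℕ) : ℤ) := by
      unfold g
      rw [hxy]
      push_cast
      ring
    have dx := Nat.div_add_mod x b
    have dy := Nat.div_add_mod y b
    have hx2 : (x : ℤ) - (y : ℤ) = (b : ℤ) * ((g n b x : ℤ) - (g n b y : ℤ)) := by
      rw [hgd]
      have ex : (x : ℤ) = (b : ℤ) * ((x / b : ℕ) : ℤ) + ((x % b : ℕ) : ℤ) := by
        exact_mod_cast congrArg (Nat.cast : ℕ → ℤ) dx.symm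
      have ey : (y : ℤ) = (b : ℤ) * ((y / b : ℕ) : ℤ) + ((y % b : ℕ) : ℤ) := by
        exact_mod_cast congrArg (Nat.cast : ℕ → ℤ) dy.symm
      rw [ex, ey, hxy]
      ring
    rw [Function.iterate_succ_apply', Function.iterate_succ_apply', ← hxd, ← hyd]
    rw [h1, hx2]
    ring

end SepSys

/-- For `n ≥ 2` and `1 ≤ k < n/2`, there exists an `(n,k)`-separating system `S`
with `|S| ≤ ⌈n/k⌉ · ⌈log_{⌈n/k⌉} n⌉`. -/
theorem stmt1 (n k : ℕ) (hn : 2 ≤ n) (hk : 1 ≤ k) (hkn : 2 * k < n) :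
    ∃ S : Finset (Finset (Fin n)),
      IsSeparatingSystem n k S ∧
      S.card ≤ ((n + k - 1) / k) * Nat.clog ((n + k - 1) / k) n := by
  classical
  set b := (n + k - 1) / k with hbdef
  have hk0 : 0 < k := hk
  have hb2 : 2 ≤ b := by
    rw [hbdef, Nat.le_div_iff_mul_le hk0]
    omega
  have hb0 : 0 < b := by omega
  have hnkb : n ≤ k * b := by
    have h1 := Nat.div_add_mod (n + k - 1) k
    have h2 : (n + k - 1) % k < k := Nat.mod_lt _ hk0
    rw [hbdef]
    omega
  set m := Nat.clog b n with hmdef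
  have hpow : n ≤ b ^ m := Nat.le_pow_clog hb2 n
  set G := SepSys.g n b with hG
  set Sf : ℕ × ℕ → Finset (Fin n) :=
    fun p => Finset.univ.filter (fun i : Fin n => G^[p.1] i.val % b = p.2) with hSf
  refine ⟨(Finset.range m ×ˢ Finset.range b).image Sf, ⟨?_, ?_⟩, ?_⟩
  · -- sizes
    intro s hs
    simp only [Finset.mem_image] at hs
    obtain ⟨p, _, rfl⟩ := hs
    have hlt : ∀ i : Fin n, G^[p.1] i.val < n :=
      fun i => SepSys.iter_lt n b hb0 p.1 i.isLt
    rw [← Finset.card_range k]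
    apply Finset.card_le_card_of_injOn (f := fun i : Fin n => G^[p.1] i.val / b)
      (t := Finset.range k)
    · intro i _
      simp only [Finset.mem_coe, Finset.mem_range]
      have h2 : G^[p.1] i.val < b * k := by
        rw [Nat.mul_comm b k]; exact lt_of_lt_of_le (hlt i) hnkb
      exact Nat.div_lt_of_lt_mul h2
    · intro i hi j hj heq
      simp only [hSf, Finset.coe_filter, Set.mem_setOf_eq, Finset.mem_univ,
        true_and] at hi hj
      simp only at heq
      have hmod : G^[p.1] i.val % b = G^[p.1] j.val % b := by rw [hi, hj]
      have d1 := Nat.div_add_mod (G^[p.1] i.val) b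
      have d2 := Nat.div_add_mod (G^[p.1] j.val) b
      have hm2 : b * (G^[p.1] i.val / b) = b * (G^[p.1] j.val / b) := by rw [heq]
      have : G^[p.1] i.val = G^[p.1] j.val := by omega
      have := SepSys.iter_inj n b hb0 p.1 i.isLt j.isLt this
      exact Fin.val_injective this
  · -- separation
    intro i j hne
    have hex : ∃ r < m, G^[r] i.val % b ≠ G^[r] j.val % b := by
      by_contra hcon
      push_neg at hcon
      have hsub := SepSys.iter_sub n b m (i := i.val) (j := j.val) hcon
      have habs : |(i.val : ℤ) - (j.val : ℤ)| < (b : ℤ) ^ m := by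
        have hbm : (n : ℤ) ≤ (b : ℤ) ^ m := by exact_mod_cast hpow
        have h1 : (i.val : ℤ) < n := by exact_mod_cast i.isLt
        have h2 : (j.val : ℤ) < n := by exact_mod_cast j.isLt
        rw [abs_lt]
        constructor <;> nlinarith [Int.ofNat_nonneg i.val, Int.ofNat_nonneg j.val]
      have hdvd : (b : ℤ) ^ m ∣ ((i.val : ℤ) - (j.val : ℤ)) := ⟨_, hsub⟩
      have := Int.eq_zero_of_abs_lt_dvd hdvd habs
      have : i.val = j.val := by omega
      exact hne (Fin.val_injective this)
    obtain ⟨r, hr, hcol⟩ := hex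
    refine ⟨Sf (r, G^[r] i.val % b), ?_, Or.inl ⟨?_, ?_⟩⟩
    · apply Finset.mem_image_of_mem
      simp only [Finset.mem_product, Finset.mem_range]
      exact ⟨hr, Nat.mod_lt _ hb0⟩
    · simp [hSf]
    · simp only [hSf, Finset.mem_filter, Finset.mem_univ, true_and]
      exact fun h => hcol h.symm
  · calc ((Finset.range m ×ˢ Finset.range b).image Sf).card
        ≤ (Finset.range m ×ˢ Finset.range b).card := Finset.card_image_le
      _ = m * b := by simp [Finset.card_product]
      _ = b * m := Nat.mul_comm m b
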